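/- For every hash sequence of n cars on m places with 1 ≤ n < m, the place V is empty at the end of the parking process, i.e. H_V = 0. -/

import Mathlib

open MeasureTheory Filter
open scoped BigOperators

attribute [local instance] Classical.propDecidable

namespace Parking

variable {m : ℕ}

/-- Final parking spot of a car whose first try is place `s`, given the set `occ`
of currently occupied places (places are cyclic, i.e. elements of `ZMod m`). -/
noncomputable def spot (occ : Finset (ZMod m)) (s : ZMod m) : ZMod m :=
  if h : ∃ t : ℕ, s + (t : ZMod m) ∉ occ then s + ((Nat.find h : ℕ) : ZMod m) else s

/-- Set of occupied places after the first `k` cars of the hash sequence `p` have parked. -/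
noncomputable def occs (p : ℕ → ZMod m) : ℕ → Finset (ZMod m)
  | 0 => ∅
  | k + 1 => insert (spot (occs p k) (p k)) (occs p k)

/-- Number of consecutive occupied places starting at `x` (0 if `x` is empty). -/
noncomputable def runLen (occ : Finset (ZMod m)) (x : ZMod m) : ℕ :=
  if h : ∃ t : ℕ, x + (t : ZMod m) ∉ occ then Nat.find h else 0

/-- First place of the block of consecutive occupied places containing `x`. -/
noncomputable def blockStart (occ : Finset (ZMod m)) (x : ZMod m) : ZMod m :=
  if h : ∃ t : ℕ, x - ((t : ZMod m) + 1) ∉ occ then x - ((Nat.find h : ℕ) : ZMod m) else x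

/-- Starting places of the blocks of consecutive occupied places. -/
noncomputable def blockStarts (occ : Finset (ZMod m)) : Finset (ZMod m) :=
  occ.filter (fun x => x - 1 ∉ occ)

/-- The multiset of sizes of the blocks of consecutive occupied places. -/
noncomputable def blockSizes (occ : Finset (ZMod m)) : Multiset ℕ :=
  (blockStarts occ).val.map (runLen occ)

/-- `B n p k` : size of the `k`-th largest block (1-indexed, `0` if there are fewer
than `k` blocks) once the `n` first cars of the hash sequence `p` have parked. -/
noncomputable def B (n : ℕ) (p : ℕ → ZMod m) (k : ℕ) : ℕ :=
  ((Multiset.sort (blockSizes (occs p n)) (· ≤ ·)).reverse).getD (k - 1) 0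

/-- `R n p k` : size of the `k`-th block (1-indexed, `0` if there are fewer than `k`
blocks), blocks being sorted by increasing date of birth (increasing order of the first
arrival of a car of the block), once the `n` first cars of `p` have parked. -/
noncomputable def R (n : ℕ) (p : ℕ → ZMod m) (k : ℕ) : ℕ :=
  (((((List.range n).map
        (fun i => blockStart (occs p n) (spot (occs p i) (p i)))).reverse.dedup).reverse).map
      (runLen (occs p n))).getD (k - 1) 0

/-- Number of places tried by car `i` beyond its first try. -/
noncomputable def offs (p : ℕ → ZMod m) (i : ℕ) : ℕ :=
  if h : ∃ t : ℕ, p i + (t : ZMod m) ∉ occs p i then Nat.find h else 0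

/-- `H n p y` : number of cars among the `n` first cars of `p` that tried place `y`,
successfully or not. -/
noncomputable def H (n : ℕ) (p : ℕ → ZMod m) (y : ZMod m) : ℕ :=
  ((Finset.range n).filter (fun i => ∃ t : ℕ, t ≤ offs p i ∧ p i + (t : ZMod m) = y)).card

/-- `Y n p k` : number of cars whose first try is place `k` (periodic in `k`). -/
noncomputable def Y (n : ℕ) (p : ℕ → ZMod m) (k : ℤ) : ℕ :=
  ((Finset.range n).filter (fun i => p i = (k : ZMod m))).card

/-- `A n p k = Y₁ + ⋯ + Y_k - k n / m`. -/
noncomputable def A (n : ℕ) (p : ℕ → ZMod m) (k : ℕ) : ℝ :=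
  (∑ j ∈ Finset.range k, (Y n p (j + 1) : ℝ)) - (k : ℝ) * n / m

/-- `V n p` : the smallest `j ∈ {1, …, m}` at which `A` attains its minimum over `{1, …, m}`. -/
noncomputable def V (n : ℕ) (p : ℕ → ZMod m) : ℕ :=
  sInf {j | 1 ≤ j ∧ j ≤ m ∧ ∀ i, 1 ≤ i → i ≤ m → A n p j ≤ A n p i}

/-- `C n p k = Y₁ + ⋯ + Y_k - k` for `0 ≤ k ≤ m`, extended to `ℤ` by `C (k + m) = C k - ℓ`. -/
noncomputable def C (n : ℕ) (p : ℕ → ZMod m) (k : ℤ) : ℤ :=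
  ((∑ j ∈ Finset.range (k.emod m).toNat, (Y n p (j + 1) : ℤ)) - ((k.emod m).toNat : ℤ))
    - k.ediv m * ((m : ℤ) - (n : ℤ))

/-- Extension of a hash sequence `Fin n → Fin m` to a map `ℕ → ZMod m`. -/
def ext (m n : ℕ) (p : Fin n → Fin m) : ℕ → ZMod m :=
  fun i => if h : i < n then (((p ⟨i, h⟩) : ℕ) : ZMod m) else 0

/-- Probability of an event under the uniform distribution on the `m ^ n` hash sequences. -/
noncomputable def parkProb (m n : ℕ) (ev : (ℕ → ZMod m) → Prop) : ℝ :=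
  ((Finset.univ.filter (fun p : Fin n → Fin m => ev (ext m n p))).card : ℝ) / (m : ℝ) ^ n

/-- Expectation of a random variable under the uniform distribution on hash sequences. -/
noncomputable def parkExp (m n : ℕ) (X : (ℕ → ZMod m) → ℝ) : ℝ :=
  (∑ p : Fin n → Fin m, X (ext m n p)) / (m : ℝ) ^ n

/-- `φ(M,N,K) = binom(N−1,K−1) (K+1)^{K−1} M (M−K−1)^{N−K−1} (M−N−1) / M^N`. -/
noncomputable def phi (M N K : ℕ) : ℝ :=
  (Nat.choose (N - 1) (K - 1) : ℝ) * ((K : ℝ) + 1) ^ (K - 1) * (M : ℝ)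
      * ((M - K - 1 : ℕ) : ℝ) ^ (N - K - 1) * ((M - N - 1 : ℕ) : ℝ) / (M : ℝ) ^ N

/-- The density `f(λ,x) = (λ/√(2π)) x^{−1/2} (1−x)^{−3/2} exp(−λ²x/(2(1−x)))` on `(0,1)`. -/
noncomputable def fdens (l x : ℝ) : ℝ :=
  if 0 < x ∧ x < 1 then
    l / Real.sqrt (2 * Real.pi) * x ^ (-(1 : ℝ) / 2) * (1 - x) ^ (-(3 : ℝ) / 2)
      * Real.exp (-(l ^ 2 * x) / (2 * (1 - x)))
  else 0



section AuxiliaryLemmas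

variable {n : ℕ} {p : ℕ → ZMod m}

lemma occs_mono {k k' : ℕ} (h : k ≤ k') : occs p k ⊆ occs p k' := by
  induction k', h using Nat.le_induction with
  | base => exact subset_rfl
  | succ k' h ih => exact ih.trans (Finset.subset_insert _ _)
lemma card_occs_le (p : ℕ → ZMod m) (k : ℕ) : (occs p k).card ≤ k := by
  induction k with
  | zero => simp [occs]
  | succ k ih => exact (Finset.card_insert_le _ _).trans (Nat.succ_le_succ ih)
lemma exists_notmem [NeZero m] {occ : Finset (ZMod m)} (hc : occ.card < m) :
    ∃ z : ZMod m, z ∉ occ := by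
  by_contra h
  push_neg at h
  have hsub : (Finset.univ : Finset (ZMod m)) ⊆ occ := fun z _ => h z
  have := Finset.card_le_card hsub
  rw [Finset.card_univ, ZMod.card] at this
  omega
lemma exists_free [NeZero m] {occ : Finset (ZMod m)} (hc : occ.card < m) (x : ZMod m) :
    ∃ t : ℕ, t < m ∧ x + (t : ZMod m) ∉ occ := by
  obtain ⟨z, hz⟩ := exists_notmem hc
  refine ⟨(z - x).val, ZMod.val_lt _, ?_⟩
  have hx : x + (((z - x).val : ℕ) : ZMod m) = z := by
    rw [ZMod.natCast_val, ZMod.cast_id]; ring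
  rwa [hx]
lemma mem_occs {k : ℕ} {z : ZMod m} :
    z ∈ occs p k ↔ ∃ i, i < k ∧ spot (occs p i) (p i) = z := by
  induction k with
  | zero => simp [occs]
  | succ k ih =>
    show z ∈ insert _ _ ↔ _
    simp only [Finset.mem_insert, ih]
    constructor
    · rintro (h | ⟨i, hi, hs⟩)
      · exact ⟨k, Nat.lt_succ_self _, h.symm⟩
      · exact ⟨i, hi.trans (Nat.lt_succ_self _), hs⟩
    · rintro ⟨i, hi, hs⟩
      rcases Nat.lt_succ_iff_lt_or_eq.mp hi with h | rfl
      · exact Or.inr ⟨i, h, hs⟩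
      · exact Or.inl hs.symm
section Main
variable [NeZero m]
lemma hfree (hn : n < m) {i : ℕ} (hi : i ≤ n) :
    ∃ t : ℕ, p i + (t : ZMod m) ∉ occs p i := by
  obtain ⟨t, _, ht⟩ := exists_free (lt_of_le_of_lt (le_trans (card_occs_le p i) hi) hn) (p i)
  exact ⟨t, ht⟩
lemma spot_eq_offs (hn : n < m) {i : ℕ} (hi : i ≤ n) :
    spot (occs p i) (p i) = p i + ((offs p i : ℕ) : ZMod m) := by
  rw [spot, offs, dif_pos (hfree hn hi), dif_pos (hfree hn hi)]
lemma mem_of_lt_offs (hn : n < m) {i : ℕ} (hi : i ≤ n) {t : ℕ} (ht : t < offs p i) :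
    p i + (t : ZMod m) ∈ occs p i := by
  rw [offs, dif_pos (hfree hn hi)] at ht
  have := Nat.find_min (hfree hn hi) ht
  exact not_not.mp this
lemma offs_lt (hn : n < m) {i : ℕ} (hi : i ≤ n) : offs p i < m := by
  obtain ⟨t, htm, ht⟩ := exists_free (lt_of_le_of_lt (le_trans (card_occs_le p i) hi) hn) (p i)
  rw [offs, dif_pos (hfree hn hi)]
  exact lt_of_le_of_lt (Nat.find_le ht) htm
lemma seg_mem (hn : n < m) {i : ℕ} (hi : i < n) {s : ℕ} (hs : s ≤ offs p i) :
    p i + (s : ZMod m) ∈ occs p n := by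
  rcases lt_or_eq_of_le hs with h | rfl
  · exact occs_mono (le_of_lt hi) (mem_of_lt_offs hn (le_of_lt hi) h)
  · have : spot (occs p i) (p i) ∈ occs p (i + 1) := Finset.mem_insert_self _ _
    rw [spot_eq_offs hn (le_of_lt hi)] at this
    exact occs_mono (Nat.succ_le_of_lt hi) this

lemma no_try (hn : n < m) (y : ZMod m)
    (hcount : ∀ j, 1 ≤ j → j ≤ m →
      ((Finset.range n).filter (fun i => ∃ w : ℕ, w < j ∧ p i = y - (w : ZMod m))).card < j) :
    ∀ i, i < n → ∀ t, t ≤ offs p i → p i + (t : ZMod m) ≠ y := by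
  intro i hi t ht hty
  have hcard : (occs p n).card < m := lt_of_le_of_lt (card_occs_le p n) hn
  have hrun : ∃ u : ℕ, y - ((u : ZMod m) + 1) ∉ occs p n := by
    obtain ⟨z, hz⟩ := exists_notmem hcard
    refine ⟨(y - 1 - z).val, ?_⟩
    have h : y - ((((y - 1 - z).val : ℕ) : ZMod m) + 1) = z := by
      rw [ZMod.natCast_val, ZMod.cast_id]; ring
    rwa [h]
  set r := Nat.find hrun with hr_def
  have hr_not : y - ((r : ZMod m) + 1) ∉ occs p n := Nat.find_spec hrun
  have hr_mem : ∀ u, u < r → y - ((u : ZMod m) + 1) ∈ occs p n := fun u hu =>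
    not_not.mp (Nat.find_min hrun hu)
  have hr_lt : r < m := by
    obtain ⟨z, hz⟩ := exists_notmem hcard
    have hw : y - ((((y - 1 - z).val : ℕ) : ZMod m) + 1) ∉ occs p n := by
      have h : y - ((((y - 1 - z).val : ℕ) : ZMod m) + 1) = z := by
        rw [ZMod.natCast_val, ZMod.cast_id]; ring
      rwa [h]
    exact lt_of_le_of_lt (Nat.find_le hw) (ZMod.val_lt _)
  have hpi : p i = y - (t : ZMod m) := by rw [← hty]; ring
  have htr : t ≤ r := by
    rw [hr_def, Nat.le_find_iff]
    intro u hu hnot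
    apply hnot
    have h : y - ((u : ZMod m) + 1) = p i + ((t - (u + 1) : ℕ) : ZMod m) := by
      rw [hpi, Nat.cast_sub (by omega : u + 1 ≤ t)]
      push_cast; ring
    rw [h]
    exact occs_mono (le_of_lt hi) (mem_of_lt_offs hn (le_of_lt hi)
      (lt_of_lt_of_le (by omega) ht))
  have claimB : ∀ v : ℕ, 1 ≤ v → v ≤ r →
      ∃ i', i' < n ∧ spot (occs p i') (p i') = y - (v : ZMod m) ∧
        ∃ w : ℕ, w < r + 1 ∧ p i' = y - (w : ZMod m) := by
    intro v hv1 hvr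
    have hzmem : y - (v : ZMod m) ∈ occs p n := by
      have h := hr_mem (v - 1) (by omega)
      have hc : (((v - 1 : ℕ) : ZMod m) + 1) = (v : ZMod m) := by
        rw [Nat.cast_sub hv1]; push_cast; ring
      rwa [hc] at h
    obtain ⟨i', hi', hs⟩ := mem_occs.mp hzmem
    refine ⟨i', hi', hs, ?_⟩
    have hspot : p i' + ((offs p i' : ℕ) : ZMod m) = y - (v : ZMod m) := by
      rw [← hs, spot_eq_offs hn (le_of_lt hi')]
    set o := offs p i' with ho
    have hvo : v + o ≤ r := by
      by_contra hgt
      push_neg at hgt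
      have ho1 : 1 ≤ o := by omega
      have hs' : p i' + ((v + o - (r + 1) : ℕ) : ZMod m) ∈ occs p n :=
        seg_mem hn hi' (by omega)
      apply hr_not
      have h : y - ((r : ZMod m) + 1) = p i' + ((v + o - (r + 1) : ℕ) : ZMod m) := by
        have hp' : p i' = y - (v : ZMod m) - (o : ZMod m) := by
          rw [← hspot]; ring
        rw [hp', Nat.cast_sub (by omega : r + 1 ≤ v + o)]
        push_cast; ring
      rw [h]; exact hs'
    refine ⟨v + o, by omega, ?_⟩
    push_cast
    linear_combination hspot
  have hspoti : spot (occs p i) (p i) = p i + ((offs p i : ℕ) : ZMod m) :=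
    spot_eq_offs hn (le_of_lt hi)
  set o := offs p i with ho
  have claimC : ∀ v : ℕ, 1 ≤ v → v ≤ r → spot (occs p i) (p i) ≠ y - (v : ZMod m) := by
    intro v hv1 hvr heq
    have holt : o < m := offs_lt hn (le_of_lt hi)
    have hd : ((o - t : ℕ) : ZMod m) = ((m - v : ℕ) : ZMod m) := by
      rw [Nat.cast_sub ht, Nat.cast_sub (by omega : v ≤ m)]
      have h2 : p i + (o : ZMod m) = y - (v : ZMod m) := by rw [← hspoti]; exact heq
      rw [hpi] at h2
      push_cast [ZMod.natCast_self]
      linear_combination h2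
    have hdo : o - t = m - v := by
      have h1 := ZMod.val_cast_of_lt (show o - t < m by omega)
      have h2 := ZMod.val_cast_of_lt (show m - v < m by omega)
      rw [← h1, ← h2, hd]
    have hole : t + (m - (r + 1)) < o := by omega
    apply hr_not
    have h : y - ((r : ZMod m) + 1) = p i + ((t + (m - (r + 1)) : ℕ) : ZMod m) := by
      rw [hpi, Nat.cast_add, Nat.cast_sub (by omega : r + 1 ≤ m)]
      push_cast [ZMod.natCast_self]
      ring
    rw [h]
    exact seg_mem hn hi (le_of_lt hole)
  -- build the injection
  classical
  let g : ℕ → ℕ := fun v => if hv : 1 ≤ v ∧ v ≤ r then (claimB v hv.1 hv.2).choose else i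
  have hg_spec : ∀ v, 1 ≤ v → v ≤ r →
      g v < n ∧ spot (occs p (g v)) (p (g v)) = y - (v : ZMod m) ∧
      ∃ w : ℕ, w < r + 1 ∧ p (g v) = y - (w : ZMod m) := by
    intro v hv1 hvr
    have : g v = (claimB v hv1 hvr).choose := by simp [g, hv1, hvr]
    rw [this]
    exact (claimB v hv1 hvr).choose_spec
  have hg0 : g 0 = i := by simp [g]
  have hinj : Set.InjOn g (Finset.range (r + 1)) := by
    intro a ha b hb hab
    simp only [Finset.coe_range, Set.mem_Iio] at ha hb
    rcases Nat.eq_zero_or_pos a with rfl | ha1 <;> rcases Nat.eq_zero_or_pos b with rfl | hb1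
    · rfl
    · exfalso
      have hb' := (hg_spec b hb1 (by omega)).2.1
      rw [← hab, hg0] at hb'
      exact claimC b hb1 (by omega) hb'
    · exfalso
      have ha' := (hg_spec a ha1 (by omega)).2.1
      rw [hab, hg0] at ha'
      exact claimC a ha1 (by omega) ha'
    · have ha' := (hg_spec a ha1 (by omega)).2.1
      have hb' := (hg_spec b hb1 (by omega)).2.1
      rw [hab, hb'] at ha'
      have hba : ((b : ℕ) : ZMod m) = ((a : ℕ) : ZMod m) := by
        linear_combination -ha'
      have h1 := ZMod.val_cast_of_lt (show a < m by omega)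
      have h2 := ZMod.val_cast_of_lt (show b < m by omega)
      rw [← h1, ← h2, hba]
  have hsub : ∀ a ∈ Finset.range (r + 1), g a ∈ (Finset.range n).filter
      (fun i' => ∃ w : ℕ, w < r + 1 ∧ p i' = y - (w : ZMod m)) := by
    intro a ha
    rw [Finset.mem_range] at ha
    rcases Nat.eq_zero_or_pos a with rfl | ha1
    · rw [hg0]
      exact Finset.mem_filter.mpr ⟨Finset.mem_range.mpr hi, ⟨t, by omega, hpi⟩⟩
    · obtain ⟨hlt, _, hw⟩ := hg_spec a ha1 (by omega)
      exact Finset.mem_filter.mpr ⟨Finset.mem_range.mpr hlt, hw⟩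
  have hle := Finset.card_le_card_of_injOn g hsub hinj
  rw [Finset.card_range] at hle
  have hlt2 := hcount (r + 1) (by omega) (by omega)
  omega

end Main

/-- Partial sums of `Y`. -/

noncomputable def Ssum (n : ℕ) (p : ℕ → ZMod m) (k : ℕ) : ℕ :=
  ∑ j ∈ Finset.range k, Y n p ((j : ℤ) + 1)

variable {n : ℕ} {p : ℕ → ZMod m}

lemma A_eq (k : ℕ) : A n p k = (Ssum n p k : ℝ) - (k : ℝ) * n / m := by
  simp [A, Ssum]

lemma Y_per [NeZero m] (k : ℤ) : Y n p (k + m) = Y n p k := by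
  have h : ((k + (m : ℤ) : ℤ) : ZMod m) = ((k : ℤ) : ZMod m) := by
    push_cast
    simp
  simp only [Y, h]

lemma Ssum_m [NeZero m] (h2 : n < m) : Ssum n p m = n := by
  have hfib := Finset.card_eq_sum_card_fiberwise
    (f := fun i => (p i - 1).val) (s := Finset.range n) (t := Finset.range m)
    (fun i _ => Finset.mem_range.mpr (ZMod.val_lt _))
  rw [Finset.card_range] at hfib
  rw [Ssum]
  conv_rhs => rw [hfib]
  apply Finset.sum_congr rfl
  intro b hb
  rw [Finset.mem_range] at hb
  simp only [Y]
  apply congrArg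
  apply Finset.filter_congr
  intro i _
  have hcast : (((b : ℤ) + 1 : ℤ) : ZMod m) = (b : ZMod m) + 1 := by push_cast; ring
  rw [hcast]
  constructor
  · intro h
    have h' : p i - 1 = (b : ZMod m) := by rw [h]; ring
    rw [h', ZMod.val_cast_of_lt hb]
  · intro h
    have h' : (((p i - 1).val : ℕ) : ZMod m) = p i - 1 := by
      rw [ZMod.natCast_val, ZMod.cast_id]
    rw [h] at h'
    linear_combination -h'

lemma sumYrev (a b : ℕ) (hab : a ≤ b) :
    ∑ w ∈ Finset.range (b - a), Y n p ((b : ℤ) - w)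
      = ∑ j' ∈ Finset.Ico a b, Y n p ((j' : ℤ) + 1) := by
  refine Finset.sum_bij' (fun w _ => b - 1 - w) (fun j' _ => b - 1 - j') ?_ ?_ ?_ ?_ ?_
  · intro w hw
    rw [Finset.mem_range] at hw
    show b - 1 - w ∈ Finset.Ico a b
    rw [Finset.mem_Ico]
    omega
  · intro j' hj'
    rw [Finset.mem_Ico] at hj'
    show b - 1 - j' ∈ Finset.range (b - a)
    rw [Finset.mem_range]
    omega
  · intro w hw
    rw [Finset.mem_range] at hw
    show b - 1 - (b - 1 - w) = w
    omega
  · intro j' hj'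
    rw [Finset.mem_Ico] at hj'
    show b - 1 - (b - 1 - j') = j'
    omega
  · intro w hw
    rw [Finset.mem_range] at hw
    show Y n p ((b : ℤ) - w) = Y n p (((b - 1 - w : ℕ) : ℤ) + 1)
    congr 1
    omega

lemma count_lt [NeZero m] (h1 : 1 ≤ n) (h2 : n < m) (j : ℕ) (hj1 : 1 ≤ j) (hjm : j ≤ m) :
    ((Finset.range n).filter
      (fun i => ∃ w : ℕ, w < j ∧ p i = ((V n p : ℕ) : ZMod m) - (w : ZMod m))).card < j := by
  classical
  set VV := V n p with hVV
  -- V properties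
  have hne : {j | 1 ≤ j ∧ j ≤ m ∧ ∀ i, 1 ≤ i → i ≤ m → A n p j ≤ A n p i}.Nonempty := by
    obtain ⟨j0, hj0, hmin⟩ := Finset.exists_min_image (Finset.Icc 1 m) (A n p)
      ⟨1, Finset.mem_Icc.mpr ⟨le_refl 1, by omega⟩⟩
    rw [Finset.mem_Icc] at hj0
    exact ⟨j0, hj0.1, hj0.2, fun i hi1 hi2 => hmin i (Finset.mem_Icc.mpr ⟨hi1, hi2⟩)⟩
  have hVmem : VV ∈ {j | 1 ≤ j ∧ j ≤ m ∧ ∀ i, 1 ≤ i → i ≤ m → A n p j ≤ A n p i} := by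
    rw [hVV, V]; exact Nat.sInf_mem hne
  obtain ⟨hV1, hVm, hVmin⟩ := hVmem
  -- count as a sum of Y's
  set count := ((Finset.range n).filter
      (fun i => ∃ w : ℕ, w < j ∧ p i = ((VV : ℕ) : ZMod m) - (w : ZMod m))).card with hcnt
  have hcount_sum : count = ∑ w ∈ Finset.range j, Y n p ((VV : ℤ) - w) := by
    set arc := (Finset.range j).image (fun w : ℕ => ((VV : ℕ) : ZMod m) - (w : ZMod m))
      with harc
    have hfe : (Finset.range n).filter
          (fun i => ∃ w : ℕ, w < j ∧ p i = ((VV : ℕ) : ZMod m) - (w : ZMod m))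
        = (Finset.range n).filter (fun i => p i ∈ arc) := by
      apply Finset.filter_congr
      intro i _
      simp only [harc, Finset.mem_image, Finset.mem_range]
      constructor
      · rintro ⟨w, hw, hpw⟩; exact ⟨w, hw, hpw.symm⟩
      · rintro ⟨w, hw, hpw⟩; exact ⟨w, hw, hpw.symm⟩
    rw [hcnt, hfe]
    rw [Finset.card_eq_sum_card_fiberwise (f := p) (t := arc)
      (s := (Finset.range n).filter (fun i => p i ∈ arc))
      (fun x hx => (Finset.mem_filter.mp hx).2)]
    rw [harc, Finset.sum_image (fun a ha b hb hab => by
      rw [Finset.coe_range, Set.mem_Iio] at ha hb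
      have hba : ((b : ℕ) : ZMod m) = ((a : ℕ) : ZMod m) := by linear_combination hab
      have e1 := ZMod.val_cast_of_lt (show a < m by omega)
      have e2 := ZMod.val_cast_of_lt (show b < m by omega)
      rw [← e1, ← e2, hba])]
    apply Finset.sum_congr rfl
    intro w hw
    rw [Finset.mem_range] at hw
    rw [Finset.filter_filter]
    have hcast : (((VV : ℤ) - (w : ℕ) : ℤ) : ZMod m) = ((VV : ℕ) : ZMod m) - (w : ZMod m) := by
      push_cast; ring
    simp only [Y, hcast]
    apply congrArg
    apply Finset.filter_congr
    intro i _
    constructor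
    · rintro ⟨_, h⟩; exact h
    · intro h
      refine ⟨?_, h⟩
      rw [h]
      exact Finset.mem_image.mpr ⟨w, Finset.mem_range.mpr hw, rfl⟩
  -- the two cases
  set q : ℝ := (n : ℝ) / m with hq
  have hm0 : (0 : ℝ) < m := by
    exact_mod_cast Nat.pos_of_ne_zero (NeZero.ne m)
  have hmq : (m : ℝ) * q = n := by rw [hq]; field_simp
  have hjq : (j : ℝ) * q < j := by
    have hnm : (n : ℝ) / m < 1 := by rw [div_lt_one hm0]; exact_mod_cast h2
    calc (j : ℝ) * q = (j : ℝ) * ((n : ℝ) / m) := by rw [hq]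
      _ < (j : ℝ) * 1 := by
          apply mul_lt_mul_of_pos_left hnm
          exact_mod_cast hj1
      _ = j := mul_one _
  have hA' : ∀ k, A n p k = (Ssum n p k : ℝ) - (k : ℝ) * q := by
    intro k; rw [A_eq, hq, mul_div_assoc]
  have key : (count : ℝ) ≤ (j : ℝ) * q := by
    rcases lt_or_ge j VV with hjV | hjV
    · -- straight case : i0 = VV - j
      set i0 := VV - j with hi0def
      have hc : count + Ssum n p i0 = Ssum n p VV := by
        rw [hcount_sum]
        have hrev := sumYrev (p := p) (n := n) i0 VV (by omega)
        rw [show VV - i0 = j by omega] at hrev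
        rw [hrev]
        simp only [Ssum, Finset.range_eq_Ico]
        rw [add_comm]
        exact Finset.sum_Ico_consecutive _ (Nat.zero_le _) (by omega)
      have hAle := hVmin i0 (by omega) (by omega)
      rw [hA', hA'] at hAle
      have hi0 : (i0 : ℝ) = (VV : ℝ) - j := by
        rw [hi0def]; push_cast [Nat.cast_sub (le_of_lt hjV)]; ring
      have h3 : (VV : ℝ) * q - (i0 : ℝ) * q = (j : ℝ) * q := by rw [hi0]; ring
      have hcR : (count : ℝ) + (Ssum n p i0 : ℝ) = (Ssum n p VV : ℝ) := by
        exact_mod_cast congrArg (Nat.cast (R := ℝ)) hc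
      linarith
    · -- wrap case : i0 = m - (j - VV)
      set i0 := m - (j - VV) with hi0def
      have hsplit : ∑ w ∈ Finset.range j, Y n p ((VV : ℤ) - w)
          = (∑ w ∈ Finset.range VV, Y n p ((VV : ℤ) - w))
            + ∑ w ∈ Finset.Ico VV j, Y n p ((VV : ℤ) - w) := by
        rw [Finset.range_eq_Ico, ← Finset.sum_Ico_consecutive _ (Nat.zero_le VV) hjV]
        rw [Finset.range_eq_Ico]
      have hfirst : ∑ w ∈ Finset.range VV, Y n p ((VV : ℤ) - w) = Ssum n p VV := by
        have hrev := sumYrev (p := p) (n := n) 0 VV (Nat.zero_le _)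
        rw [Nat.sub_zero] at hrev
        rw [hrev, Ssum, Finset.range_eq_Ico]
      have hsecond : ∑ w ∈ Finset.Ico VV j, Y n p ((VV : ℤ) - w)
          = ∑ j' ∈ Finset.Ico i0 m, Y n p ((j' : ℤ) + 1) := by
        rw [Finset.sum_Ico_eq_sum_range]
        have hper : ∀ w ∈ Finset.range (j - VV),
            Y n p ((VV : ℤ) - ((VV + w : ℕ) : ℤ)) = Y n p ((m : ℤ) - w) := by
          intro w hw
          rw [Finset.mem_range] at hw
          have h : ((m : ℤ) - w) = ((VV : ℤ) - ((VV + w : ℕ) : ℤ)) + m := by push_cast; ring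
          rw [h, Y_per]
        rw [Finset.sum_congr rfl hper]
        have hrev := sumYrev (p := p) (n := n) i0 m (by omega)
        rw [show m - i0 = j - VV by omega] at hrev
        exact hrev
      have hc : count + Ssum n p i0 = Ssum n p VV + n := by
        rw [hcount_sum, hsplit, hfirst, hsecond]
        have : Ssum n p i0 + ∑ j' ∈ Finset.Ico i0 m, Y n p ((j' : ℤ) + 1) = Ssum n p m := by
          simp only [Ssum, Finset.range_eq_Ico]
          exact Finset.sum_Ico_consecutive _ (by omega) (by omega)
        rw [Ssum_m h2] at this
        omega
      have hAle := hVmin i0 (by omega) (by omega)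
      rw [hA', hA'] at hAle
      have hi0 : (i0 : ℝ) = (m : ℝ) - j + VV := by
        rw [hi0def]
        push_cast [Nat.cast_sub (show j - VV ≤ m by omega), Nat.cast_sub hjV]
        ring
      have h3 : (VV : ℝ) * q - (i0 : ℝ) * q = (j : ℝ) * q - (m : ℝ) * q := by
        rw [hi0]; ring
      have hcR : (count : ℝ) + (Ssum n p i0 : ℝ) = (Ssum n p VV : ℝ) + n := by
        exact_mod_cast congrArg (Nat.cast (R := ℝ)) hc
      linarith
  have : (count : ℝ) < j := lt_of_le_of_lt key hjq
  exact_mod_cast this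

end AuxiliaryLemmas

/-- The place `V` (first location of the minimum of the empirical-process walk `A`)
is empty at the end of the parking process. -/
theorem place_V_is_empty
    (m n : ℕ) (h1 : 1 ≤ n) (h2 : n < m) (p : ℕ → ZMod m) :
    H n p ((V n p : ℕ) : ZMod m) = 0 := by
  haveI : NeZero m := ⟨by omega⟩
  simp only [H]
  rw [Finset.card_eq_zero, Finset.filter_eq_empty_iff]
  intro i hi
  rw [Finset.mem_range] at hi
  rintro ⟨t, ht, hty⟩
  exact no_try h2 _ (fun j hj1 hjm => count_lt h1 h2 j hj1 hjm) i hi t ht hty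
end Parking
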